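/- If f:[0,1]→[0,∞] is a decreasing function with ∫₀¹ f(p) dp ≤ 1, then for any probability space and any random variable P with Q(P ≤ ε) ≤ ε for all ε ∈ (0,1), we have E[f(P)] ≤ 1. -/

import Mathlib

open MeasureTheory
open scoped ENNReal NNReal

/-- Layer cake for `ℝ≥0∞`-valued functions. -/
lemma layercake_ennreal {α : Type*} [MeasurableSpace α] (μ : Measure α) [SFinite μ]
    (g : α → ℝ≥0∞) (hg : Measurable g) :
    ∫⁻ a, g a ∂μ = ∫⁻ t in Set.Ioi (0:ℝ), μ {a | ENNReal.ofReal t < g a} := by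
  have h1 : ∀ a, g a = ∫⁻ t in Set.Ioi (0:ℝ),
      Set.indicator {t : ℝ | ENNReal.ofReal t < g a} 1 t := by
    intro a
    have hs : MeasurableSet {t : ℝ | ENNReal.ofReal t < g a} :=
      ENNReal.measurable_ofReal measurableSet_Iio
    rw [lintegral_indicator_one hs, Measure.restrict_apply hs]
    rcases eq_or_ne (g a) ∞ with h | h
    · have : {t : ℝ | ENNReal.ofReal t < g a} ∩ Set.Ioi 0 = Set.Ioi 0 := by
        ext t; simp [h, ENNReal.ofReal_lt_top]
      rw [this, h, Real.volume_Ioi]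
    · have : {t : ℝ | ENNReal.ofReal t < g a} ∩ Set.Ioi 0 = Set.Ioo 0 (g a).toReal := by
        ext t
        simp only [Set.mem_inter_iff, Set.mem_setOf_eq, Set.mem_Ioi, Set.mem_Ioo]
        constructor
        · rintro ⟨h1, h2⟩
          exact ⟨h2, (ENNReal.ofReal_lt_iff_lt_toReal h2.le h).mp h1⟩
        · rintro ⟨h1, h2⟩
          exact ⟨(ENNReal.ofReal_lt_iff_lt_toReal h1.le h).mpr h2, h1⟩
      rw [this, Real.volume_Ioo, sub_zero, ENNReal.ofReal_toReal h]
  calc ∫⁻ a, g a ∂μ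
      = ∫⁻ a, (∫⁻ t in Set.Ioi (0:ℝ),
          Set.indicator {p : α × ℝ | ENNReal.ofReal p.2 < g p.1} 1 (a, t)) ∂μ := by
        refine lintegral_congr fun a => ?_
        rw [h1 a]
        refine lintegral_congr fun t => ?_
        simp [Set.indicator_apply]
    _ = ∫⁻ t in Set.Ioi (0:ℝ), ∫⁻ a,
          Set.indicator {p : α × ℝ | ENNReal.ofReal p.2 < g p.1} 1 (a, t) ∂μ := by
        refine lintegral_lintegral_swap ?_
        refine (Measurable.indicator measurable_one ?_).aemeasurable
        exact measurableSet_lt (ENNReal.measurable_ofReal.comp measurable_snd)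
          (hg.comp measurable_fst)
    _ = ∫⁻ t in Set.Ioi (0:ℝ), μ {a | ENNReal.ofReal t < g a} := by
        refine lintegral_congr fun t => ?_
        have hs : MeasurableSet {a | ENNReal.ofReal t < g a} := hg measurableSet_Ioi
        rw [← lintegral_indicator_one hs]
        refine lintegral_congr fun a => ?_
        simp [Set.indicator_apply]

/-- If `f : [0,1] → [0,∞]` is decreasing with `∫₀¹ f ≤ 1`, then for any
probability space and any p-variable `P`, `E[f(P)] ≤ 1`. -/
theorem calibrator_of_integral_le_one
    {Ω : Type*} [MeasurableSpace Ω] (Q : Measure Ω) [IsProbabilityMeasure Q]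
    (f : ℝ → ℝ≥0∞) (hf : AntitoneOn f (Set.Icc 0 1))
    (hint : ∫⁻ p in Set.Icc (0:ℝ) 1, f p ≤ 1)
    (P : Ω → ℝ) (hPmeas : Measurable P) (hP01 : ∀ ω, P ω ∈ Set.Icc (0:ℝ) 1)
    (hP : ∀ ε ∈ Set.Ioo (0:ℝ) 1, Q {ω | P ω ≤ ε} ≤ ENNReal.ofReal ε) :
    ∫⁻ ω, f (P ω) ∂Q ≤ 1 := by
  -- clamp function
  set c : ℝ → ℝ := fun x => max 0 (min x 1) with hc
  have hcmem : ∀ x, c x ∈ Set.Icc (0:ℝ) 1 := fun x =>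
    ⟨le_max_left _ _, max_le (by norm_num) (min_le_right _ _)⟩
  have hcmono : Monotone c := fun x y hxy =>
    max_le_max le_rfl (min_le_min hxy le_rfl)
  have hcid : ∀ x ∈ Set.Icc (0:ℝ) 1, c x = x := fun x hx => by
    simp [hc, min_eq_left hx.2, max_eq_right hx.1]
  set F : ℝ → ℝ≥0∞ := fun x => f (c x) with hF
  have hFanti : Antitone F := fun x y hxy => hf (hcmem x) (hcmem y) (hcmono hxy)
  have hFmeas : Measurable F := hFanti.measurable
  have hFeq : ∀ x ∈ Set.Icc (0:ℝ) 1, F x = f x := fun x hx => by show f (c x) = f x; rw [hcid x hx]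
  -- Q(P ≤ 0) = 0
  have hP0 : Q {ω | P ω ≤ 0} = 0 := by
    refine le_antisymm ?_ zero_le
    have : ∀ ε ∈ Set.Ioo (0:ℝ) 1, Q {ω | P ω ≤ 0} ≤ ENNReal.ofReal ε := fun ε hε =>
      le_trans (measure_mono fun ω (h : P ω ≤ 0) => h.trans hε.1.le) (hP ε hε)
    have h2 : Filter.Tendsto (fun n : ℕ => ENNReal.ofReal ((1:ℝ)/(n+2))) Filter.atTop (nhds 0) := by
      simpa using ENNReal.tendsto_ofReal
        (tendsto_one_div_atTop_nhds_zero_nat.comp (Filter.tendsto_add_atTop_nat 2))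
    refine ge_of_tendsto h2 (Filter.Eventually.of_forall fun n => ?_)
    refine this _ ⟨by positivity, ?_⟩
    rw [div_lt_one (by positivity)]
    have : (0:ℝ) < n + 1 := by positivity
    linarith
  -- key superlevel comparison
  have key : ∀ t : ℝ, Q {ω | ENNReal.ofReal t < F (P ω)} ≤
      (volume.restrict (Set.Icc (0:ℝ) 1)) {x | ENNReal.ofReal t < F x} := by
    intro t
    have hsmeas : MeasurableSet {x : ℝ | ENNReal.ofReal t < F x} :=
      hFmeas measurableSet_Ioi
    rw [Measure.restrict_apply hsmeas]
    set S : Set ℝ := {x | ENNReal.ofReal t < F x} ∩ Set.Icc 0 1 with hS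
    set m : ℝ := sSup (insert 0 S) with hm
    have hSsub : S ⊆ Set.Icc 0 1 := Set.inter_subset_right
    have hbdd : BddAbove (insert 0 S) := by
      refine ⟨1, ?_⟩
      rintro x (rfl | hx)
      · norm_num
      · exact (hSsub hx).2
    have hm0 : 0 ≤ m := le_csSup hbdd (Set.mem_insert 0 S)
    have hm1 : m ≤ 1 := csSup_le (Set.insert_nonempty _ _) (by
      rintro x (rfl | hx)
      · norm_num
      · exact (hSsub hx).2)
    have hdown : ∀ x ∈ S, ∀ y ∈ Set.Icc (0:ℝ) 1, y ≤ x → y ∈ S := by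
      rintro x ⟨hxt, hx01⟩ y hy01 hyx
      exact ⟨lt_of_lt_of_le hxt (hFanti hyx), hy01⟩
    have hIco : Set.Ico 0 m ⊆ S := by
      rintro y ⟨hy0, hym⟩
      obtain ⟨x, hxmem, hyx⟩ := exists_lt_of_lt_csSup (Set.insert_nonempty _ _) hym
      rcases hxmem with rfl | hxS
      · linarith
      · exact hdown x hxS y ⟨hy0, hym.le.trans hm1⟩ hyx.le
    have hvol : ENNReal.ofReal m ≤ volume S := by
      calc ENNReal.ofReal m = volume (Set.Ico 0 m) := by rw [Real.volume_Ico, sub_zero]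
        _ ≤ volume S := measure_mono hIco
    have hQS : Q {ω | ENNReal.ofReal t < F (P ω)} ≤ ENNReal.ofReal m := by
      have hsub : {ω | ENNReal.ofReal t < F (P ω)} ⊆ {ω | P ω ≤ m} := by
        intro ω hω
        have hPS : P ω ∈ S := ⟨hω, hP01 ω⟩
        exact le_csSup hbdd (Set.mem_insert_of_mem _ hPS)
      rcases eq_or_lt_of_le hm0 with h0 | h0
      · calc Q {ω | ENNReal.ofReal t < F (P ω)} ≤ Q {ω | P ω ≤ m} := measure_mono hsub
          _ = 0 := by rw [← h0]; exact hP0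
          _ ≤ _ := zero_le
      rcases eq_or_lt_of_le hm1 with h1 | h1
      · calc Q {ω | ENNReal.ofReal t < F (P ω)} ≤ 1 := prob_le_one
          _ = ENNReal.ofReal m := by rw [h1]; simp
      · exact le_trans (measure_mono hsub) (hP m ⟨h0, h1⟩)
    exact hQS.trans hvol
  -- assemble
  have hl : ∫⁻ ω, f (P ω) ∂Q = ∫⁻ ω, F (P ω) ∂Q :=
    lintegral_congr fun ω => (hFeq _ (hP01 ω)).symm
  have hr : ∫⁻ p in Set.Icc (0:ℝ) 1, F p = ∫⁻ p in Set.Icc (0:ℝ) 1, f p :=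
    setLIntegral_congr_fun measurableSet_Icc hFeq
  calc ∫⁻ ω, f (P ω) ∂Q = ∫⁻ ω, F (P ω) ∂Q := hl
    _ = ∫⁻ t in Set.Ioi (0:ℝ), Q {ω | ENNReal.ofReal t < F (P ω)} :=
        layercake_ennreal Q _ (hFmeas.comp hPmeas)
    _ ≤ ∫⁻ t in Set.Ioi (0:ℝ),
          (volume.restrict (Set.Icc (0:ℝ) 1)) {x | ENNReal.ofReal t < F x} :=
        lintegral_mono fun t => key t
    _ = ∫⁻ p in Set.Icc (0:ℝ) 1, F p :=
        (layercake_ennreal (volume.restrict (Set.Icc (0:ℝ) 1)) F hFmeas).symm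
    _ = ∫⁻ p in Set.Icc (0:ℝ) 1, f p := hr
    _ ≤ 1 := hint
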